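/- Let Π = (I_n)_{n∈ω} be an interval partition of ω (intervals listed in natural order) and define F_Π : ω → ω by F_Π(k) = max I_{n+2} where n is such that k ∈ I_n. Let f : ω → ω and let x be an infinite, co-infinite subset of ω such that for every k ∈ ω the second element of ω ∖ x greater than k is larger than f(k). If x ∈ M(Π), then F_Π eventually majorizes f (f(k) ≤ F_Π(k) for all but finitely many k). -/
import Mathlib


open Set Cardinal MeasureTheory

/-- The characteristic function of a set of naturals, as a point of Cantor space `2^ω`. -/
noncomputable def chi (x : Set ℕ) : ℕ → Bool := fun n => @decide (n ∈ x) (Classical.dec _)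

/-- `[ω]^ω`: the collection of infinite subsets of ω. -/
def InfSets : Set (Set ℕ) := {x : Set ℕ | x.Infinite}

/-- `X ⊆ [ω]^ω` is downward closed for almost-inclusion `x ≤ y ↔ (x \ y).Finite`. -/
def DownClosed (X : Set (Set ℕ)) : Prop :=
  ∀ y ∈ X, ∀ x : Set ℕ, x.Infinite → (x \ y).Finite → x ∈ X

/-- `X` is meager as a subset of Cantor space `2^ω` (product topology on `ℕ → Bool`). -/
def MeagerSet (X : Set (Set ℕ)) : Prop := IsMeagre (chi '' X)

/-- A partition of ω into consecutive finite intervals `I n = [e n, e (n+1))`. -/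
structure IntervalPartition where
  e : ℕ → ℕ
  zero : e 0 = 0
  mono : StrictMono e

/-- The `n`-th interval of an interval partition. -/
def IntervalPartition.I (P : IntervalPartition) (n : ℕ) : Set ℕ :=
  Set.Ico (P.e n) (P.e (n + 1))

/-- `X ⊆ [ω]^ω` is groupwise dense: downward closed, and for every partition of ω into
finite intervals, the union of some infinitely many of the intervals belongs to `X`. -/
def GroupwiseDense (X : Set (Set ℕ)) : Prop :=
  X ⊆ InfSets ∧ DownClosed X ∧
    ∀ P : IntervalPartition, ∃ A : Set ℕ, A.Infinite ∧ (⋃ n ∈ A, P.I n) ∈ X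

/-- `g` eventually majorizes `f`. -/
def EvMaj (f g : ℕ → ℕ) : Prop := ∀ᶠ k in Filter.atTop, f k ≤ g k

/-- `M(Π)`: the infinite subsets of ω including only finitely many intervals of `Π`. -/
def MSet (P : IntervalPartition) : Set (Set ℕ) :=
  {x : Set ℕ | x.Infinite ∧ {n : ℕ | P.I n ⊆ x}.Finite}

/-- The index `n` of the interval `I n` of `P` containing `k`. -/
def idx (P : IntervalPartition) (k : ℕ) : ℕ := Nat.findGreatest (fun n => P.e n ≤ k) k

/-- `F_Π(k)`: the largest element of `I (n+2)`, where `k ∈ I n`. -/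
def FPart (P : IntervalPartition) (k : ℕ) : ℕ := P.e (idx P k + 3) - 1

/-- The groupwise density number 𝔤. -/
noncomputable def gNum : Cardinal :=
  sInf {c : Cardinal | ∃ S : Set (Set (Set ℕ)), (∀ G ∈ S, GroupwiseDense G) ∧
    #S = c ∧ InfSets ∩ ⋂₀ S = ∅}

/-- The bounding number 𝔟. -/
noncomputable def bNum : Cardinal :=
  sInf {c : Cardinal | ∃ F : Set (ℕ → ℕ), #F = c ∧ ∀ g : ℕ → ℕ, ∃ f ∈ F, ¬ EvMaj f g}

/-- The dominating number 𝔡. -/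
noncomputable def dNum : Cardinal :=
  sInf {c : Cardinal | ∃ F : Set (ℕ → ℕ), #F = c ∧ ∀ g : ℕ → ℕ, ∃ f ∈ F, EvMaj g f}

/-- `B_M`: the ideal of meager downward-closed subsets of `[ω]^ω`. -/
def BM : Set (Set (Set ℕ)) := {X : Set (Set ℕ) | X ⊆ InfSets ∧ DownClosed X ∧ MeagerSet X}

/-- `add(B_M)`. -/
noncomputable def addBM : Cardinal :=
  sInf {c : Cardinal | ∃ S : Set (Set (Set ℕ)), S ⊆ BM ∧ #S = c ∧ ⋃₀ S ∉ BM}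

/-- `cov(B_M)`. -/
noncomputable def covBM : Cardinal :=
  sInf {c : Cardinal | ∃ S : Set (Set (Set ℕ)), S ⊆ BM ∧ #S = c ∧
    {x : Set ℕ | x.Infinite ∧ xᶜ.Infinite} ⊆ ⋃₀ S}

/-- `unif(B_M)`. -/
noncomputable def unifBM : Cardinal :=
  sInf {c : Cardinal | ∃ S : Set (Set ℕ), (∀ x ∈ S, x.Infinite ∧ xᶜ.Infinite) ∧ #S = c ∧
    ∀ X ∈ BM, ¬ S ⊆ X}

/-- `cof(B_M)`. -/
noncomputable def cofBM : Cardinal :=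
  sInf {c : Cardinal | ∃ C : Set (Set (Set ℕ)), C ⊆ BM ∧ #C = c ∧
    ∀ X ∈ BM, ∃ Y ∈ C, X ⊆ Y}

/-- `X ⊆ [ω]^ω` is dense: every infinite `A` has an infinite subset `B ∈ X`. -/
def DenseM (X : Set (Set ℕ)) : Prop :=
  ∀ A : Set ℕ, A.Infinite → ∃ B ⊆ A, B.Infinite ∧ B ∈ X

/-- 𝔤′: the least number of non-meager downward-closed ideals on ω with empty intersection. -/
noncomputable def gNum' : Cardinal :=
  sInf {c : Cardinal | ∃ S : Set (Set (Set ℕ)),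
    (∀ X ∈ S, X ⊆ InfSets ∧ DownClosed X ∧ (∀ x ∈ X, ∀ y ∈ X, x ∪ y ∈ X) ∧ ¬ MeagerSet X) ∧
    #S = c ∧ InfSets ∩ ⋂₀ S = ∅}

/-- The splitting number 𝔰. -/
noncomputable def sNum : Cardinal :=
  sInf {c : Cardinal | ∃ S : Set (Set ℕ), #S = c ∧
    ∀ x : Set ℕ, x.Infinite → ∃ y ∈ S, (x ∩ y).Infinite ∧ (x \ y).Infinite}

/-- Lemma 2: if `x` is infinite and co-infinite, for every `k` the second element of
`ω ∖ x` greater than `k` exceeds `f k` (equivalently, `ω ∖ x` has at most one element in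
`(k, f k]`), and `x ∈ M(Π)`, then `F_Π` eventually majorizes `f`. -/
theorem stmt8 (P : IntervalPartition) (f : ℕ → ℕ) (x : Set ℕ)
    (hinf : x.Infinite) (hcoinf : xᶜ.Infinite)
    (hsecond : ∀ k : ℕ, Set.Subsingleton {m : ℕ | k < m ∧ m ≤ f k ∧ m ∉ x})
    (hx : x ∈ MSet P) :
    EvMaj f (FPart P) := by
  obtain ⟨-, hfin⟩ := hx
  obtain ⟨B, hB⟩ := hfin.bddAbove
  rw [EvMaj, Filter.eventually_atTop]
  refine ⟨P.e (B + 1), fun k hk => ?_⟩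
  set n := idx P k with hn
  have hle : ∀ m : ℕ, m ≤ P.e m := fun m => P.mono.le_apply
  have hkey : B + 1 ≤ n :=
    Nat.le_findGreatest (P := fun j => P.e j ≤ k) (le_trans (hle _) hk) hk
  have h2 : k < P.e (n + 1) := by
    by_contra h
    push_neg at h
    have : n + 1 ≤ idx P k :=
      Nat.le_findGreatest (P := fun j => P.e j ≤ k) (le_trans (hle _) h) h
    omega
  by_contra hcon
  push_neg at hcon
  have he3 : 0 < P.e (n + 3) := by
    have := P.mono (show 0 < n + 3 by omega)
    rw [P.zero] at this
    exact this
  have hf : P.e (n + 3) ≤ f k := by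
    unfold FPart at hcon
    rw [← hn] at hcon
    omega
  have hnot : ∀ j : ℕ, B + 1 ≤ j → ∃ m ∈ P.I j, m ∉ x := by
    intro j hj
    have : ¬ P.I j ⊆ x := fun hsub => by
      have : j ≤ B := hB hsub
      omega
    exact Set.not_subset.mp this
  obtain ⟨m1, hm1I, hm1x⟩ := hnot (n + 1) (by omega)
  obtain ⟨m2, hm2I, hm2x⟩ := hnot (n + 2) (by omega)
  simp only [IntervalPartition.I, Set.mem_Ico] at hm1I hm2I
  have hm1b : m1 < P.e (n + 2) := hm1I.2
  have hm2b : m2 < P.e (n + 3) := hm2I.2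
  have e23 : P.e (n + 2) ≤ P.e (n + 3) := (P.mono (by omega)).le
  have e12 : P.e (n + 1) ≤ P.e (n + 2) := (P.mono (by omega)).le
  have hm1 : m1 ∈ {m : ℕ | k < m ∧ m ≤ f k ∧ m ∉ x} :=
    ⟨lt_of_lt_of_le h2 hm1I.1, by omega, hm1x⟩
  have hm2 : m2 ∈ {m : ℕ | k < m ∧ m ≤ f k ∧ m ∉ x} :=
    ⟨lt_of_lt_of_le h2 (le_trans e12 hm2I.1), by omega, hm2x⟩
  have := hsecond k hm1 hm2
  omega
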